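/- Entry bound for R·B₁·R·B₂·R (second-derivative resolvent estimate). Fix d, N_b ≥ 1 and 𝔪, c₁ > 0. There exists C > 0, depending only on d, N_b, 𝔪, c₁, such that the following holds. Let Λ be a countable set, y : Λ → ℝ^d 𝔪-separated, m₁, m₂ ∈ Λ, and let 𝔡, γ, γ₁ > 0. Let R, B₁, B₂ be bounded operators on ℓ²(Λ × {1,…,N_b}) whose matrix entries satisfy |R^{ab}_{ℓk}| ≤ (2/𝔡) e^{−γ r_{ℓk}} and, for i = 1,2, |（B_i)^{ab}_{ℓk}| ≤ c₁ e^{−γ₁ (r_{ℓ m_i} + r_{m_i k})} for all ℓ,k,a,b. Then, with η := min{γ, γ₁}, for all ℓ ∈ Λ and 1 ≤ a ≤ N_b: |(R B₁ R B₂ R)^{aa}_{ℓℓ}| ≤ C 𝔡^{−3} (1 + η^{−8d}) e^{−(η/4)(r_{ℓ m₁} + r_{ℓ m₂})}. -/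

import Mathlib

open MeasureTheory Metric
open scoped ENNReal NNReal

/-! ### Auxiliary lemmas -/

private lemma exp_neg_s_pow {s : ℝ} (n : ℕ) : Real.exp (-s * n) = Real.exp (-s) ^ n := by
  rw [show -s * (n : ℝ) = (n : ℝ) * (-s) by ring, Real.exp_nat_mul]

private lemma succ_pow_le {d n : ℕ} : ((n : ℝ) + 1) ^ d ≤ 2 ^ d * (1 + (n : ℝ) ^ d) := by
  cases n with
  | zero =>
      have h1 : (1:ℝ) ≤ 2 ^ d := by exact_mod_cast Nat.one_le_pow d 2 (by norm_num)
      have h2 : (0:ℝ) ≤ (0:ℝ) ^ d := by positivity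
      simp only [Nat.cast_zero, zero_add, one_pow]
      nlinarith
  | succ m =>
      push_cast
      have h1 : ((m : ℝ) + 1 + 1) ^ d ≤ (2 * ((m : ℝ) + 1)) ^ d :=
        pow_le_pow_left₀ (by positivity) (by linarith) d
      have h2 : (0:ℝ) ≤ ((m:ℝ) + 1) ^ d := by positivity
      have h3 : (0:ℝ) < 2 ^ d := by positivity
      nlinarith [mul_pow (2:ℝ) ((m:ℝ) + 1) d]

private lemma nat_shell_summable {d : ℕ} {s : ℝ} (hs : 0 < s) :
    Summable (fun n : ℕ => ((n : ℝ) + 1) ^ d * Real.exp (-s * n)) := by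
  have hq0 : (0:ℝ) ≤ Real.exp (-s) := (Real.exp_pos _).le
  have hr : Real.exp (-s) < 1 := Real.exp_lt_one_iff.mpr (by linarith)
  have hr' : ‖Real.exp (-s)‖ < 1 := by rwa [Real.norm_eq_abs, abs_of_nonneg hq0]
  have h1 : Summable (fun n : ℕ => (n : ℝ) ^ d * Real.exp (-s) ^ n) :=
    summable_pow_mul_geometric_of_norm_lt_one d hr'
  have h2 : Summable (fun n : ℕ => Real.exp (-s) ^ n) := summable_geometric_of_lt_one hq0 hr
  have hbig : Summable (fun n : ℕ =>
      2 ^ d * Real.exp (-s) ^ n + 2 ^ d * ((n : ℝ) ^ d * Real.exp (-s) ^ n)) :=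
    (h2.mul_left _).add (h1.mul_left _)
  refine Summable.of_nonneg_of_le (fun n => by positivity) (fun n => ?_) hbig
  rw [exp_neg_s_pow]
  calc ((n : ℝ) + 1) ^ d * Real.exp (-s) ^ n ≤ 2 ^ d * (1 + (n : ℝ) ^ d) * Real.exp (-s) ^ n :=
        mul_le_mul_of_nonneg_right succ_pow_le (by positivity)
    _ = 2 ^ d * Real.exp (-s) ^ n + 2 ^ d * ((n : ℝ) ^ d * Real.exp (-s) ^ n) := by ring

set_option maxHeartbeats 1000000 in
private lemma nat_shell_tsum {d : ℕ} {s : ℝ} (hs : 0 < s) :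
    ∑' n : ℕ, ((n : ℝ) + 1) ^ d * Real.exp (-s * n)
      ≤ 4 ^ (d + 1) * (d.factorial : ℝ) * (1 + s⁻¹ ^ (d + 1)) := by
  have hsum := nat_shell_summable (d := d) hs
  have hq0 : (0:ℝ) ≤ Real.exp (-s/2) := (Real.exp_pos _).le
  have hr : Real.exp (-s/2) < 1 := Real.exp_lt_one_iff.mpr (by linarith)
  have hterm : ∀ n : ℕ, (((n+1 : ℕ) : ℝ) + 1) ^ d * Real.exp (-s * (n+1 : ℕ))
      ≤ (d.factorial : ℝ) * (4 / s) ^ d * (Real.exp (-s/2) * Real.exp (-s/2) ^ n) := by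
    intro n
    have hx : (0:ℝ) ≤ s * ((n:ℝ) + 1) / 2 := by positivity
    have hexp := Real.pow_div_factorial_le_exp _ hx d
    have hfac : (0:ℝ) < (d.factorial : ℝ) := by exact_mod_cast d.factorial_pos
    have hkey : ((n : ℝ) + 1) ^ d
        ≤ (d.factorial : ℝ) * (2 / s) ^ d * Real.exp (s * ((n:ℝ)+1) / 2) := by
      have h1 : (s * ((n:ℝ) + 1) / 2) ^ d ≤ (d.factorial : ℝ) * Real.exp (s * ((n:ℝ)+1)/2) := by
        rw [div_le_iff₀ hfac] at hexp; linarith [hexp]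
      have h2 : ((n:ℝ) + 1) ^ d = (2 / s) ^ d * (s * ((n:ℝ) + 1) / 2) ^ d := by
        rw [← mul_pow]; congr 1; field_simp
      rw [h2]
      calc (2 / s) ^ d * (s * ((n:ℝ) + 1) / 2) ^ d
          ≤ (2 / s) ^ d * ((d.factorial : ℝ) * Real.exp (s * ((n:ℝ)+1)/2)) :=
            mul_le_mul_of_nonneg_left h1 (by positivity)
        _ = (d.factorial : ℝ) * (2 / s) ^ d * Real.exp (s * ((n:ℝ)+1)/2) := by ring
    have hsucc : (((n+1 : ℕ) : ℝ) + 1) ^ d ≤ 2 ^ d * ((n : ℝ) + 1) ^ d := by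
      push_cast
      calc ((n : ℝ) + 1 + 1) ^ d ≤ (2 * ((n : ℝ) + 1)) ^ d :=
            pow_le_pow_left₀ (by positivity) (by linarith) d
        _ = 2 ^ d * ((n : ℝ) + 1) ^ d := mul_pow _ _ _
    have hE : Real.exp (-s * ((n+1:ℕ):ℝ)) = Real.exp (-(s * ((n:ℝ)+1))) := by push_cast; ring_nf
    have hcomb : Real.exp (s * ((n:ℝ)+1) / 2) * Real.exp (-(s * ((n:ℝ)+1)))
        = Real.exp (-s/2) * Real.exp (-s/2) ^ n := by
      rw [← Real.exp_nat_mul, ← Real.exp_add, ← Real.exp_add]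
      congr 1
      push_cast; ring
    calc (((n+1 : ℕ) : ℝ) + 1) ^ d * Real.exp (-s * (n+1 : ℕ))
        ≤ 2 ^ d * ((n : ℝ) + 1) ^ d * Real.exp (-s * (n+1 : ℕ)) :=
          mul_le_mul_of_nonneg_right hsucc (Real.exp_pos _).le
      _ ≤ 2 ^ d * ((d.factorial : ℝ) * (2 / s) ^ d * Real.exp (s * ((n:ℝ)+1) / 2))
            * Real.exp (-s * (n+1 : ℕ)) := by
          apply mul_le_mul_of_nonneg_right _ (Real.exp_pos _).le
          exact mul_le_mul_of_nonneg_left hkey (by positivity)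
      _ = (d.factorial : ℝ) * (4 / s) ^ d
            * (Real.exp (s * ((n:ℝ)+1) / 2) * Real.exp (-(s * ((n:ℝ)+1)))) := by
          rw [hE]
          have h4 : ((4:ℝ) / s) ^ d = 2 ^ d * (2 / s) ^ d := by
            rw [← mul_pow]; congr 1; field_simp; ring
          rw [h4]; ring
      _ = (d.factorial : ℝ) * (4 / s) ^ d * (Real.exp (-s/2) * Real.exp (-s/2) ^ n) := by
          rw [hcomb]
  have hgeo : Summable (fun n : ℕ => Real.exp (-s/2) ^ n) := summable_geometric_of_lt_one hq0 hr
  have hmaj : Summable (fun n : ℕ =>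
      (d.factorial : ℝ) * (4 / s) ^ d * (Real.exp (-s/2) * Real.exp (-s/2) ^ n)) :=
    ((hgeo.mul_left _).mul_left _)
  have hshift : Summable (fun n : ℕ => (((n+1 : ℕ) : ℝ) + 1) ^ d * Real.exp (-s * (n+1 : ℕ))) :=
    ((summable_nat_add_iff 1).mpr hsum)
  have htail : ∑' n : ℕ, (((n+1 : ℕ) : ℝ) + 1) ^ d * Real.exp (-s * (n+1 : ℕ))
      ≤ (d.factorial : ℝ) * (4 / s) ^ d * (Real.exp (-s/2) * (1 - Real.exp (-s/2))⁻¹) := by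
    calc ∑' n : ℕ, (((n+1 : ℕ) : ℝ) + 1) ^ d * Real.exp (-s * (n+1 : ℕ))
        ≤ ∑' n : ℕ, (d.factorial : ℝ) * (4 / s) ^ d * (Real.exp (-s/2) * Real.exp (-s/2) ^ n) :=
          Summable.tsum_le_tsum hterm hshift hmaj
      _ = (d.factorial : ℝ) * (4 / s) ^ d * (Real.exp (-s/2) * ∑' n : ℕ, Real.exp (-s/2) ^ n) := by
          rw [tsum_mul_left, tsum_mul_left]
      _ = _ := by rw [tsum_geometric_of_lt_one hq0 hr]
  have hgb : Real.exp (-s/2) * (1 - Real.exp (-s/2))⁻¹ ≤ 2 / s := by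
    have hE1 : 1 + s/2 ≤ Real.exp (s/2) := by
      have := Real.add_one_le_exp (s/2); linarith
    have hEpos : (0:ℝ) < Real.exp (s/2) := Real.exp_pos _
    have hEne : Real.exp (s/2) - 1 > 0 := by linarith
    have heq : Real.exp (-s/2) * (1 - Real.exp (-s/2))⁻¹ = (Real.exp (s/2) - 1)⁻¹ := by
      rw [show -s/2 = -(s/2) by ring, Real.exp_neg]
      field_simp
    rw [heq]
    calc (Real.exp (s/2) - 1)⁻¹ ≤ (s/2)⁻¹ :=
          inv_anti₀ (by linarith) (by linarith)
      _ = 2 / s := by rw [inv_div]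
  have hfinal : ∑' n : ℕ, ((n : ℝ) + 1) ^ d * Real.exp (-s * n)
      ≤ 1 + (d.factorial : ℝ) * (4 / s) ^ d * (2 / s) := by
    rw [Summable.tsum_eq_zero_add hsum]
    have h0 : (((0:ℕ) : ℝ) + 1) ^ d * Real.exp (-s * (0:ℕ)) = 1 := by norm_num
    rw [h0]
    have h5 : (d.factorial : ℝ) * (4 / s) ^ d * (Real.exp (-s/2) * (1 - Real.exp (-s/2))⁻¹)
        ≤ (d.factorial : ℝ) * (4 / s) ^ d * (2 / s) :=
      mul_le_mul_of_nonneg_left hgb (by positivity)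
    linarith [htail.trans h5]
  refine hfinal.trans ?_
  have hpow : (d.factorial : ℝ) * (4 / s) ^ d * (2 / s)
      = (d.factorial : ℝ) * (2 * 4 ^ d * s⁻¹ ^ (d+1)) := by
    rw [div_pow, pow_succ, inv_pow]
    ring
  have hfac1 : (1:ℝ) ≤ (d.factorial : ℝ) := by exact_mod_cast d.factorial_pos
  have h4one : (1:ℝ) ≤ 4 ^ d := by exact_mod_cast Nat.one_le_pow d 4 (by norm_num)
  have hs1 : (0:ℝ) ≤ s⁻¹ ^ (d+1) := by positivity
  have h4 : (4:ℝ) ^ (d+1) = 4 * 4 ^ d := by ring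
  rw [hpow, h4]
  set X := s⁻¹ ^ (d+1) with hX
  nlinarith [mul_le_mul hfac1 h4one (by linarith) (by linarith),
    mul_nonneg (mul_nonneg (by linarith : (0:ℝ) ≤ (d.factorial:ℝ)) (by linarith : (0:ℝ) ≤ 4^d)) hs1]

private lemma card_le_of_separated {d : ℕ} {𝔪 : ℝ} (h𝔪 : 0 < 𝔪) {Λ : Type}
    {y : Λ → EuclideanSpace ℝ (Fin d)}
    (hsep : ∀ ℓ k : Λ, ℓ ≠ k → 𝔪 ≤ dist (y ℓ) (y k))
    (x : EuclideanSpace ℝ (Fin d)) {t : ℝ} (ht : 0 ≤ t) (F : Finset Λ)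
    (hF : ∀ k ∈ F, dist (y k) x ≤ t) :
    (F.card : ℝ) ≤ (1 + 2 * t / 𝔪) ^ d := by
  have hr2 : (0:ℝ) < 𝔪 / 2 := by linarith
  set μ := (volume : Measure (EuclideanSpace ℝ (Fin d)))
  set B := μ (ball (0 : EuclideanSpace ℝ (Fin d)) 1) with hB
  have hB0 : B ≠ 0 := (measure_ball_pos μ _ one_pos).ne'
  have hBtop : B ≠ ⊤ := measure_ball_lt_top.ne
  have hdisj : Set.PairwiseDisjoint (F : Set Λ) (fun k => ball (y k) (𝔪 / 2)) := by
    intro a _ b _ hab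
    exact ball_disjoint_ball (by linarith [hsep a b hab])
  have hmeas : μ (⋃ k ∈ F, ball (y k) (𝔪 / 2)) = ∑ k ∈ F, μ (ball (y k) (𝔪 / 2)) :=
    measure_biUnion_finset hdisj (fun k _ => measurableSet_ball)
  have hsub : (⋃ k ∈ F, ball (y k) (𝔪 / 2)) ⊆ ball x (t + 𝔪 / 2) := by
    intro z hz
    simp only [Set.mem_iUnion] at hz
    obtain ⟨k, hk, hzk⟩ := hz
    have := hF k hk
    simp only [mem_ball] at hzk ⊢
    calc dist z x ≤ dist z (y k) + dist (y k) x := dist_triangle _ _ _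
      _ < 𝔪 / 2 + t := by linarith
      _ = t + 𝔪 / 2 := by ring
  have hball : ∀ k : Λ, μ (ball (y k) (𝔪 / 2)) = ENNReal.ofReal ((𝔪 / 2) ^ d) * B := by
    intro k
    rw [Measure.addHaar_ball_of_pos μ (y k) hr2, finrank_euclideanSpace_fin]
  have hbig : μ (ball x (t + 𝔪 / 2)) = ENNReal.ofReal ((t + 𝔪 / 2) ^ d) * B := by
    rw [Measure.addHaar_ball_of_pos μ x (by linarith), finrank_euclideanSpace_fin]
  have hle : (F.card : ℝ≥0∞) * ENNReal.ofReal ((𝔪 / 2) ^ d) * B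
      ≤ ENNReal.ofReal ((t + 𝔪 / 2) ^ d) * B := by
    calc (F.card : ℝ≥0∞) * ENNReal.ofReal ((𝔪 / 2) ^ d) * B
        = ∑ k ∈ F, μ (ball (y k) (𝔪 / 2)) := by
          simp [hball, Finset.sum_const, mul_assoc]
      _ = μ (⋃ k ∈ F, ball (y k) (𝔪 / 2)) := hmeas.symm
      _ ≤ μ (ball x (t + 𝔪 / 2)) := measure_mono hsub
      _ = _ := hbig
  rw [ENNReal.mul_le_mul_iff_left hB0 hBtop] at hle
  have h1 : ((F.card : ℝ) * (𝔪 / 2) ^ d) ≤ (t + 𝔪 / 2) ^ d := by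
    rw [← ENNReal.ofReal_le_ofReal_iff (by positivity),
      ENNReal.ofReal_mul (by positivity)] at *
    · simpa [ENNReal.ofReal_natCast] using hle
  have h2 : (F.card : ℝ) ≤ ((t + 𝔪 / 2) / (𝔪 / 2)) ^ d := by
    rw [div_pow, le_div_iff₀ (by positivity)]
    exact h1
  have h3 : (t + 𝔪 / 2) / (𝔪 / 2) = 1 + 2 * t / 𝔪 := by
    field_simp
    ring
  rwa [h3] at h2

private lemma sep_exp_sum {d : ℕ} {𝔪 : ℝ} (h𝔪 : 0 < 𝔪) {Λ : Type} [DecidableEq Λ]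
    {y : Λ → EuclideanSpace ℝ (Fin d)}
    (hsep : ∀ ℓ k : Λ, ℓ ≠ k → 𝔪 ≤ dist (y ℓ) (y k))
    (x : EuclideanSpace ℝ (Fin d)) {s : ℝ} (hs : 0 < s)
    (hcard : ∀ (t : ℝ), 0 ≤ t → ∀ (F : Finset Λ), (∀ k ∈ F, dist (y k) x ≤ t) →
      (F.card : ℝ) ≤ (1 + 2 * t / 𝔪) ^ d)
    (hshellsum : Summable (fun n : ℕ => ((n : ℝ) + 1) ^ d * Real.exp (-s * n)))
    (hshellbound : ∑' n : ℕ, ((n : ℝ) + 1) ^ d * Real.exp (-s * n)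
      ≤ 4 ^ (d + 1) * (d.factorial : ℝ) * (1 + s⁻¹ ^ (d + 1))) :
    Summable (fun k : Λ => Real.exp (-s * dist (y k) x)) ∧
    ∑' k : Λ, Real.exp (-s * dist (y k) x)
      ≤ (1 + 2 / 𝔪) ^ d * (4 ^ (d + 1) * (d.factorial : ℝ)) * (1 + s⁻¹ ^ (d + 1)) := by
  set g : ℕ → ℝ := fun n => (1 + 2 * ((n : ℝ) + 1) / 𝔪) ^ d * Real.exp (-s * n) with hg
  have hg_nonneg : ∀ n, 0 ≤ g n := fun n => by
    have : (0:ℝ) ≤ 1 + 2 * ((n : ℝ) + 1) / 𝔪 := by positivity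
    positivity
  have hg_le : ∀ n, g n ≤ (1 + 2 / 𝔪) ^ d * (((n : ℝ) + 1) ^ d * Real.exp (-s * n)) := by
    intro n
    have hn1 : (1:ℝ) ≤ (n : ℝ) + 1 := by
      have := Nat.cast_nonneg (α := ℝ) n; linarith
    have hbase : 1 + 2 * ((n : ℝ) + 1) / 𝔪 ≤ (1 + 2 / 𝔪) * ((n : ℝ) + 1) := by
      have hexp : (1 + 2 / 𝔪) * ((n : ℝ) + 1) = ((n : ℝ) + 1) + 2 * ((n : ℝ) + 1) / 𝔪 := by
        field_simp
      rw [hexp]; linarith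
    have hpow : (1 + 2 * ((n : ℝ) + 1) / 𝔪) ^ d ≤ ((1 + 2 / 𝔪) * ((n : ℝ) + 1)) ^ d :=
      pow_le_pow_left₀ (by positivity) hbase d
    calc g n ≤ ((1 + 2 / 𝔪) * ((n : ℝ) + 1)) ^ d * Real.exp (-s * n) :=
          mul_le_mul_of_nonneg_right hpow (Real.exp_pos _).le
      _ = (1 + 2 / 𝔪) ^ d * (((n : ℝ) + 1) ^ d * Real.exp (-s * n)) := by
          rw [mul_pow]; ring
  have hg_sum : Summable g :=
    Summable.of_nonneg_of_le hg_nonneg hg_le (hshellsum.mul_left _)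
  have hg_tsum : ∑' n, g n
      ≤ (1 + 2 / 𝔪) ^ d * (4 ^ (d + 1) * (d.factorial : ℝ)) * (1 + s⁻¹ ^ (d + 1)) := by
    calc ∑' n, g n ≤ ∑' n : ℕ, (1 + 2 / 𝔪) ^ d * (((n : ℝ) + 1) ^ d * Real.exp (-s * n)) :=
          Summable.tsum_le_tsum hg_le hg_sum (hshellsum.mul_left _)
      _ = (1 + 2 / 𝔪) ^ d * ∑' n : ℕ, ((n : ℝ) + 1) ^ d * Real.exp (-s * n) := tsum_mul_left
      _ ≤ (1 + 2 / 𝔪) ^ d * (4 ^ (d + 1) * (d.factorial : ℝ) * (1 + s⁻¹ ^ (d + 1))) :=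
          mul_le_mul_of_nonneg_left hshellbound (by positivity)
      _ = _ := by ring
  have hfin : ∀ F : Finset Λ, ∑ k ∈ F, Real.exp (-s * dist (y k) x) ≤ ∑' n, g n := by
    intro F
    set ν : Λ → ℕ := fun k => ⌊dist (y k) x⌋₊ with hν
    have h1 : ∑ k ∈ F, Real.exp (-s * dist (y k) x) ≤ ∑ k ∈ F, Real.exp (-s * (ν k : ℝ)) := by
      apply Finset.sum_le_sum
      intro k _
      apply Real.exp_le_exp.mpr
      have h := Nat.floor_le (dist_nonneg : 0 ≤ dist (y k) x)
      nlinarith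
    have h2 : ∑ k ∈ F, Real.exp (-s * (ν k : ℝ))
        = ∑ n ∈ F.image ν, (F.filter (fun k => ν k = n)).card • Real.exp (-s * (n : ℝ)) :=
      Finset.sum_comp (fun n : ℕ => Real.exp (-s * (n : ℝ))) ν
    have h3 : ∀ n ∈ F.image ν,
        (F.filter (fun k => ν k = n)).card • Real.exp (-s * (n : ℝ)) ≤ g n := by
      intro n _
      rw [nsmul_eq_mul]
      apply mul_le_mul_of_nonneg_right _ (Real.exp_pos _).le
      apply hcard ((n : ℝ) + 1) (by positivity)
      intro k hk
      simp only [Finset.mem_filter] at hk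
      rw [← hk.2, hν]
      exact (Nat.lt_floor_add_one (dist (y k) x)).le
    calc ∑ k ∈ F, Real.exp (-s * dist (y k) x)
        ≤ ∑ n ∈ F.image ν, (F.filter (fun k => ν k = n)).card • Real.exp (-s * (n : ℝ)) :=
          h1.trans (le_of_eq h2)
      _ ≤ ∑ n ∈ F.image ν, g n := Finset.sum_le_sum h3
      _ ≤ ∑' n, g n := Summable.sum_le_tsum _ (fun n _ => hg_nonneg n) hg_sum
  have hsummable : Summable (fun k : Λ => Real.exp (-s * dist (y k) x)) :=
    summable_of_sum_le (fun k => (Real.exp_pos _).le) hfin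
  exact ⟨hsummable, (Summable.tsum_le_of_sum_le hsummable hfin).trans hg_tsum⟩

private lemma prod_sum {Λ : Type} {Nb : ℕ} (f : Λ → ℝ) (hpos : ∀ k, 0 ≤ f k)
    (hsum : Summable f) {c : ℝ} (hts : ∑' k, f k ≤ c) :
    Summable (fun p : Λ × Fin Nb => f p.1) ∧
    ∑' p : Λ × Fin Nb, f p.1 ≤ Nb * c := by
  have hnn : 0 ≤ fun p : Λ × Fin Nb => f p.1 := fun p => hpos p.1
  have hslice : ∀ a : Λ, Summable (fun _ : Fin Nb => f a) := fun a => (hasSum_fintype _).summable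
  have hinner : ∀ a : Λ, ∑' _ : Fin Nb, f a = (Nb : ℝ) * f a := by
    intro a
    rw [tsum_fintype]
    simp [Finset.sum_const, Finset.card_univ, nsmul_eq_mul]
  have hsummable : Summable (fun p : Λ × Fin Nb => f p.1) := by
    rw [summable_prod_of_nonneg hnn]
    refine ⟨hslice, ?_⟩
    simpa only [hinner] using hsum.mul_left (Nb : ℝ)
  refine ⟨hsummable, ?_⟩
  rw [Summable.tsum_prod' hsummable hslice]
  calc ∑' a : Λ, ∑' _ : Fin Nb, f a = ∑' a : Λ, (Nb : ℝ) * f a := tsum_congr hinner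
    _ = (Nb : ℝ) * ∑' a, f a := tsum_mul_left
    _ ≤ (Nb : ℝ) * c := mul_le_mul_of_nonneg_left hts (Nat.cast_nonneg _)

private lemma norm_mul_exp_le {A B a b x y c w v : ℝ}
    (hA : A ≤ a * Real.exp x) (hB : B ≤ b * Real.exp y)
    (hA0 : 0 ≤ A) (hB0 : 0 ≤ B) (ha : 0 ≤ a) (hb : 0 ≤ b)
    (hab : a * b = c) (hexp : x + y ≤ w + v) :
    A * B ≤ (c * Real.exp w) * Real.exp v := by
  calc A * B ≤ (a * Real.exp x) * (b * Real.exp y) :=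
        mul_le_mul hA hB hB0 (by positivity)
    _ = (a * b) * Real.exp (x + y) := by rw [Real.exp_add]; ring
    _ ≤ (a * b) * Real.exp (w + v) :=
        mul_le_mul_of_nonneg_left (Real.exp_le_exp.mpr hexp) (by positivity)
    _ = (c * Real.exp w) * Real.exp v := by rw [Real.exp_add, ← hab]; ring

private lemma key_pow_bound {d : ℕ} (hd : 1 ≤ d) {η : ℝ} (hη : 0 < η) :
    (1 + (η / 2)⁻¹ ^ (d + 1)) ^ 4 ≤ 2 ^ (4 * d + 9) * (1 + η⁻¹ ^ (8 * d)) := by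
  have hu0 : (0:ℝ) ≤ η⁻¹ := by positivity
  have h2u : (η / 2)⁻¹ = 2 * η⁻¹ := by
    rw [inv_div]; ring
  rw [h2u, mul_pow]
  set v := η⁻¹ ^ (d + 1) with hv
  have hv0 : (0:ℝ) ≤ v := pow_nonneg hu0 _
  have h2pow1 : (1:ℝ) ≤ 2 ^ (d + 1) := by
    exact_mod_cast Nat.one_le_pow (d + 1) 2 (by norm_num)
  have h1 : 1 + 2 ^ (d + 1) * v ≤ 2 ^ (d + 1) * (1 + v) := by nlinarith
  have h2 : (1 + 2 ^ (d + 1) * v) ^ 4 ≤ (2 ^ (d + 1) * (1 + v)) ^ 4 :=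
    pow_le_pow_left₀ (by positivity) h1 4
  have h3 : (1 + v) ^ 4 ≤ 16 * (1 + v ^ 4) := by
    nlinarith [sq_nonneg (v - 1), sq_nonneg (v ^ 2 - 1), sq_nonneg (v ^ 2 - v), sq_nonneg v,
      pow_nonneg hv0 3, pow_nonneg hv0 4]
  have h8d0 : (0:ℝ) ≤ η⁻¹ ^ (8 * d) := pow_nonneg hu0 _
  have h4 : v ^ 4 ≤ 1 + η⁻¹ ^ (8 * d) := by
    rw [hv, ← pow_mul]
    rcases le_or_gt η⁻¹ 1 with h | h
    · have := pow_le_one₀ hu0 h (n := (d + 1) * 4)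
      linarith
    · have hle : (d + 1) * 4 ≤ 8 * d := by omega
      have := pow_le_pow_right₀ h.le hle
      linarith
  have hp : (2:ℝ) ^ (4 * d + 9) = ((2:ℝ) ^ (d + 1)) ^ 4 * 32 := by
    rw [← pow_mul, show 4 * d + 9 = (d + 1) * 4 + 5 by ring, pow_add]
    norm_num
  calc (1 + 2 ^ (d + 1) * v) ^ 4 ≤ (2 ^ (d + 1) * (1 + v)) ^ 4 := h2
    _ = (2 ^ (d + 1)) ^ 4 * (1 + v) ^ 4 := mul_pow _ _ _
    _ ≤ (2 ^ (d + 1)) ^ 4 * (16 * (1 + v ^ 4)) :=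
        mul_le_mul_of_nonneg_left h3 (by positivity)
    _ ≤ (2 ^ (d + 1)) ^ 4 * (32 * (1 + η⁻¹ ^ (8 * d))) := by
        apply mul_le_mul_of_nonneg_left _ (by positivity)
        nlinarith
    _ = 2 ^ (4 * d + 9) * (1 + η⁻¹ ^ (8 * d)) := by rw [hp]; ring

/-- Matrix entry `T^{ab}_{ℓk} = ⟨δ_{(ℓ,a)}, T δ_{(k,b)}⟩` of a bounded operator on `ℓ²(ι)`. -/
noncomputable def entry {ι : Type*} [DecidableEq ι]
    (T : lp (fun _ : ι => ℂ) 2 →L[ℂ] lp (fun _ : ι => ℂ) 2) (i j : ι) : ℂ :=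
  inner ℂ (lp.single 2 i (1 : ℂ)) (T (lp.single 2 j (1 : ℂ)))

section entrylemmas

variable {ι : Type*} [DecidableEq ι]

private lemma hasSum_entry_comp (T S : lp (fun _ : ι => ℂ) 2 →L[ℂ] lp (fun _ : ι => ℂ) 2)
    (i j : ι) :
    HasSum (fun k => entry S k j * entry T i k) (entry (T ∘L S) i j) := by
  have h0 : HasSum (fun k : ι => lp.single 2 k ((S (lp.single 2 j (1:ℂ))) k))
      (S (lp.single 2 j (1:ℂ))) := lp.hasSum_single ENNReal.ofNat_ne_top _
  have h1 := h0.mapL ((innerSL ℂ (lp.single 2 i (1:ℂ))).comp T)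
  convert h1 using 2 with k
  case e'_3 => rfl
  case e'_6 => rfl
  simp only [ContinuousLinearMap.comp_apply, innerSL_apply_apply]
  have hsingle : lp.single (E := fun _ : ι => ℂ) 2 k ((S (lp.single 2 j (1:ℂ))) k)
      = ((S (lp.single 2 j (1:ℂ))) k) • lp.single 2 k (1:ℂ) := by
    rw [← lp.single_smul]
    congr 1
    simp
  rw [hsingle, ContinuousLinearMap.map_smul, inner_smul_right]
  have hval : (S (lp.single 2 j (1:ℂ))) k = entry S k j := by
    rw [entry, lp.inner_single_left]
    simp
  rw [hval]
  rfl

private lemma entry_comp_le (T S : lp (fun _ : ι => ℂ) 2 →L[ℂ] lp (fun _ : ι => ℂ) 2)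
    (i j : ι) (φ : ι → ℝ) (c : ℝ) (hφ : Summable φ)
    (hb : ∀ k, ‖entry T i k‖ * ‖entry S k j‖ ≤ c * φ k) :
    ‖entry (T ∘L S) i j‖ ≤ c * ∑' k, φ k := by
  have hs := hasSum_entry_comp T S i j
  have hnorm : ∀ k, ‖entry S k j * entry T i k‖ ≤ c * φ k := by
    intro k
    rw [norm_mul, mul_comm]
    exact hb k
  have hsum : Summable (fun k => ‖entry S k j * entry T i k‖) :=
    Summable.of_nonneg_of_le (fun k => norm_nonneg _) hnorm (hφ.mul_left c)
  calc ‖entry (T ∘L S) i j‖ = ‖∑' k, entry S k j * entry T i k‖ := by rw [hs.tsum_eq]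
    _ ≤ ∑' k, ‖entry S k j * entry T i k‖ := norm_tsum_le_tsum_norm hsum
    _ ≤ ∑' k, c * φ k := Summable.tsum_le_tsum hnorm hsum (hφ.mul_left c)
    _ = c * ∑' k, φ k := tsum_mul_left

end entrylemmas

/-- Entry bound for `R·B₁·R·B₂·R` (second-derivative resolvent estimate):
with `|R^{ab}_{ℓk}| ≤ (2/𝔡)e^{−γ r_{ℓk}}` and `|(B_i)^{ab}_{ℓk}| ≤ c₁ e^{−γ₁(r_{ℓm_i}+r_{m_ik})}`,
and `η = min{γ,γ₁}`:
`|(RB₁RB₂R)^{aa}_{ℓℓ}| ≤ C 𝔡^{−3}(1+η^{−8d}) e^{−(η/4)(r_{ℓm₁}+r_{ℓm₂})}`, with `C` depending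
only on `d, N_b, 𝔪, c₁`. -/
theorem stmt7 (d Nb : ℕ) (hd : 1 ≤ d) (hNb : 1 ≤ Nb) (𝔪 c₁ : ℝ)
    (h𝔪 : 0 < 𝔪) (hc₁ : 0 < c₁) :
    ∃ C : ℝ, 0 < C ∧
      ∀ (Λ : Type) [Countable Λ] [DecidableEq Λ]
        (y : Λ → EuclideanSpace ℝ (Fin d)),
        (∀ ℓ k : Λ, ℓ ≠ k → 𝔪 ≤ dist (y ℓ) (y k)) →
        ∀ (m₁ m₂ : Λ) (𝔡 γ γ₁ : ℝ), 0 < 𝔡 → 0 < γ → 0 < γ₁ →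
          ∀ R B₁ B₂ : lp (fun _ : Λ × Fin Nb => ℂ) 2 →L[ℂ] lp (fun _ : Λ × Fin Nb => ℂ) 2,
            (∀ (ℓ k : Λ) (a b : Fin Nb),
              ‖entry R (ℓ, a) (k, b)‖ ≤ (2 / 𝔡) * Real.exp (-γ * dist (y ℓ) (y k))) →
            (∀ (ℓ k : Λ) (a b : Fin Nb),
              ‖entry B₁ (ℓ, a) (k, b)‖ ≤
                c₁ * Real.exp (-γ₁ * (dist (y ℓ) (y m₁) + dist (y m₁) (y k)))) →
            (∀ (ℓ k : Λ) (a b : Fin Nb),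
              ‖entry B₂ (ℓ, a) (k, b)‖ ≤
                c₁ * Real.exp (-γ₁ * (dist (y ℓ) (y m₂) + dist (y m₂) (y k)))) →
            ∀ (ℓ : Λ) (a : Fin Nb),
              ‖entry (R ∘L B₁ ∘L R ∘L B₂ ∘L R) (ℓ, a) (ℓ, a)‖ ≤
                C * 𝔡⁻¹ ^ 3 * (1 + (min γ γ₁)⁻¹ ^ (8 * d)) *
                  Real.exp (-(min γ γ₁ / 4) *
                    (dist (y ℓ) (y m₁) + dist (y ℓ) (y m₂))) := by
  have h2m : (0:ℝ) < 2 / 𝔪 := div_pos (by norm_num) h𝔪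
  have hbase : (0:ℝ) < 1 + 2 / 𝔪 := by linarith
  have hfacpos : (0:ℝ) < (d.factorial : ℝ) := by exact_mod_cast d.factorial_pos
  have hK0 : (0:ℝ) < (1 + 2 / 𝔪) ^ d * (4 ^ (d + 1) * (d.factorial : ℝ)) :=
    mul_pos (pow_pos hbase d) (mul_pos (by positivity) hfacpos)
  have hNbR : (0:ℝ) < (Nb : ℝ) := by
    exact_mod_cast Nat.lt_of_lt_of_le Nat.zero_lt_one hNb
  refine ⟨8 * c₁ ^ 2 * (Nb : ℝ) ^ 4 * ((1 + 2 / 𝔪) ^ d * (4 ^ (d + 1) * (d.factorial : ℝ))) ^ 4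
      * 2 ^ (4 * d + 9),
    mul_pos (mul_pos (mul_pos (mul_pos (by norm_num) (pow_pos hc₁ 2)) (pow_pos hNbR 4))
      (pow_pos hK0 4)) (by positivity), ?_⟩
  intro Λ _ _ y hsep m₁ m₂ 𝔡 γ γ₁ h𝔡 hγ hγ₁ R B₁ B₂ hRbnd hB₁bnd hB₂bnd ℓ a
  set η := min γ γ₁ with hηdef
  have hη : 0 < η := lt_min hγ hγ₁
  have hs2 : 0 < η / 2 := by positivity
  have h2𝔡 : (0:ℝ) < 2 / 𝔡 := div_pos (by norm_num) h𝔡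
  set M := (Nb : ℝ) * ((1 + 2 / 𝔪) ^ d * (4 ^ (d + 1) * (d.factorial : ℝ))
      * (1 + (η / 2)⁻¹ ^ (d + 1))) with hMdef
  have hM0 : 0 < M := by
    apply mul_pos hNbR
    apply mul_pos hK0
    positivity
  have hΦ : ∀ z : Λ,
      Summable (fun p : Λ × Fin Nb => Real.exp (-(η / 2) * dist (y p.1) (y z)))
      ∧ ∑' p : Λ × Fin Nb, Real.exp (-(η / 2) * dist (y p.1) (y z)) ≤ M := by
    intro z
    obtain ⟨h1, h2⟩ := sep_exp_sum h𝔪 hsep (y z) hs2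
      (fun t ht F hF => card_le_of_separated h𝔪 hsep (y z) ht F hF)
      (nat_shell_summable hs2) (nat_shell_tsum hs2)
    have hP := prod_sum (Nb := Nb) _ (fun k => (Real.exp_pos _).le) h1 h2
    exact ⟨hP.1, by rw [hMdef]; exact hP.2⟩
  -- entry bounds with the uniform rate η
  have hexp_mono : ∀ (t r : ℝ), η ≤ t → 0 ≤ r → Real.exp (-t * r) ≤ Real.exp (-η * r) := by
    intro t r htt hr
    apply Real.exp_le_exp.mpr
    nlinarith
  have hR' : ∀ i k : Λ × Fin Nb,
      ‖entry R i k‖ ≤ (2 / 𝔡) * Real.exp (-η * dist (y i.1) (y k.1)) := by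
    intro i k
    exact (hRbnd i.1 k.1 i.2 k.2).trans
      (mul_le_mul_of_nonneg_left (hexp_mono γ _ (min_le_left _ _) dist_nonneg) h2𝔡.le)
  have hB₁' : ∀ i k : Λ × Fin Nb,
      ‖entry B₁ i k‖ ≤ c₁ * Real.exp (-η * (dist (y i.1) (y m₁) + dist (y m₁) (y k.1))) := by
    intro i k
    exact (hB₁bnd i.1 k.1 i.2 k.2).trans
      (mul_le_mul_of_nonneg_left
        (hexp_mono γ₁ _ (min_le_right _ _) (add_nonneg dist_nonneg dist_nonneg)) hc₁.le)
  have hB₂' : ∀ i k : Λ × Fin Nb,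
      ‖entry B₂ i k‖ ≤ c₁ * Real.exp (-η * (dist (y i.1) (y m₂) + dist (y m₂) (y k.1))) := by
    intro i k
    exact (hB₂bnd i.1 k.1 i.2 k.2).trans
      (mul_le_mul_of_nonneg_left
        (hexp_mono γ₁ _ (min_le_right _ _) (add_nonneg dist_nonneg dist_nonneg)) hc₁.le)
  -- Step 1 : B₂ ∘L R
  have claim1 : ∀ k j : Λ × Fin Nb, ‖entry (B₂ ∘L R) k j‖ ≤
      c₁ * (2 / 𝔡) * M
        * Real.exp (-η * dist (y k.1) (y m₂) + -(η / 2) * dist (y m₂) (y j.1)) := by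
    intro k j
    obtain ⟨hφs, hφb⟩ := hΦ m₂
    have hb : ∀ p : Λ × Fin Nb, ‖entry B₂ k p‖ * ‖entry R p j‖ ≤
        (c₁ * (2 / 𝔡)
          * Real.exp (-η * dist (y k.1) (y m₂) + -(η / 2) * dist (y m₂) (y j.1)))
          * Real.exp (-(η / 2) * dist (y p.1) (y m₂)) := by
      intro p
      refine norm_mul_exp_le (hB₂' k p) (hR' p j) (norm_nonneg _) (norm_nonneg _)
        hc₁.le h2𝔡.le rfl ?_
      have ht := dist_triangle (y m₂) (y p.1) (y j.1)
      have h1 : 0 ≤ η * dist (y p.1) (y j.1) := mul_nonneg hη.le dist_nonneg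
      have h3 : 0 ≤ η * (dist (y m₂) (y p.1) + dist (y p.1) (y j.1) - dist (y m₂) (y j.1)) :=
        mul_nonneg hη.le (by linarith)
      have hcomm : dist (y p.1) (y m₂) = dist (y m₂) (y p.1) := dist_comm _ _
      rw [hcomm]
      linarith
    have h := entry_comp_le B₂ R k j _ _ hφs hb
    calc ‖entry (B₂ ∘L R) k j‖ ≤ _ := h
      _ ≤ (c₁ * (2 / 𝔡)
            * Real.exp (-η * dist (y k.1) (y m₂) + -(η / 2) * dist (y m₂) (y j.1))) * M := by
          apply mul_le_mul_of_nonneg_left hφb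
          have := Real.exp_pos (-η * dist (y k.1) (y m₂) + -(η / 2) * dist (y m₂) (y j.1))
          nlinarith [mul_pos hc₁ h2𝔡]
      _ = _ := by ring
  -- Step 2 : R ∘L (B₂ ∘L R)
  have claim2 : ∀ i j : Λ × Fin Nb, ‖entry (R ∘L (B₂ ∘L R)) i j‖ ≤
      c₁ * (2 / 𝔡) ^ 2 * M ^ 2
        * Real.exp (-(η / 2) * dist (y i.1) (y m₂) + -(η / 2) * dist (y m₂) (y j.1)) := by
    intro i j
    obtain ⟨hφs, hφb⟩ := hΦ i.1
    have hb : ∀ p : Λ × Fin Nb, ‖entry R i p‖ * ‖entry (B₂ ∘L R) p j‖ ≤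
        (c₁ * (2 / 𝔡) ^ 2 * M
          * Real.exp (-(η / 2) * dist (y i.1) (y m₂) + -(η / 2) * dist (y m₂) (y j.1)))
          * Real.exp (-(η / 2) * dist (y p.1) (y i.1)) := by
      intro p
      refine norm_mul_exp_le (hR' i p) (claim1 p j) (norm_nonneg _) (norm_nonneg _)
        h2𝔡.le (by positivity) (by ring) ?_
      have ht := dist_triangle (y i.1) (y p.1) (y m₂)
      have h1 : 0 ≤ η * dist (y p.1) (y m₂) := mul_nonneg hη.le dist_nonneg
      have h3 : 0 ≤ η * (dist (y i.1) (y p.1) + dist (y p.1) (y m₂) - dist (y i.1) (y m₂)) :=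
        mul_nonneg hη.le (by linarith)
      have hcomm : dist (y p.1) (y i.1) = dist (y i.1) (y p.1) := dist_comm _ _
      rw [hcomm]
      linarith
    have h := entry_comp_le R (B₂ ∘L R) i j _ _ hφs hb
    calc ‖entry (R ∘L (B₂ ∘L R)) i j‖ ≤ _ := h
      _ ≤ (c₁ * (2 / 𝔡) ^ 2 * M
            * Real.exp (-(η / 2) * dist (y i.1) (y m₂) + -(η / 2) * dist (y m₂) (y j.1))) * M := by
          apply mul_le_mul_of_nonneg_left hφb
          have := Real.exp_pos (-(η / 2) * dist (y i.1) (y m₂) + -(η / 2) * dist (y m₂) (y j.1))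
          positivity
      _ = _ := by ring
  -- Step 3 : B₁ ∘L (R ∘L (B₂ ∘L R))
  have claim3 : ∀ i j : Λ × Fin Nb, ‖entry (B₁ ∘L (R ∘L (B₂ ∘L R))) i j‖ ≤
      c₁ ^ 2 * (2 / 𝔡) ^ 2 * M ^ 3
        * Real.exp (-(η / 2) * dist (y i.1) (y m₁) + -(η / 2) * dist (y m₂) (y j.1)) := by
    intro i j
    obtain ⟨hφs, hφb⟩ := hΦ m₁
    have hb : ∀ p : Λ × Fin Nb, ‖entry B₁ i p‖ * ‖entry (R ∘L (B₂ ∘L R)) p j‖ ≤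
        (c₁ ^ 2 * (2 / 𝔡) ^ 2 * M ^ 2
          * Real.exp (-(η / 2) * dist (y i.1) (y m₁) + -(η / 2) * dist (y m₂) (y j.1)))
          * Real.exp (-(η / 2) * dist (y p.1) (y m₁)) := by
      intro p
      refine norm_mul_exp_le (hB₁' i p) (claim2 p j) (norm_nonneg _) (norm_nonneg _)
        hc₁.le (by positivity) (by ring) ?_
      have h1 : 0 ≤ η * dist (y i.1) (y m₁) := mul_nonneg hη.le dist_nonneg
      have h2 : 0 ≤ η * dist (y m₁) (y p.1) := mul_nonneg hη.le dist_nonneg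
      have h3 : 0 ≤ η * dist (y p.1) (y m₂) := mul_nonneg hη.le dist_nonneg
      have hcomm : dist (y p.1) (y m₁) = dist (y m₁) (y p.1) := dist_comm _ _
      rw [hcomm]
      linarith
    have h := entry_comp_le B₁ (R ∘L (B₂ ∘L R)) i j _ _ hφs hb
    calc ‖entry (B₁ ∘L (R ∘L (B₂ ∘L R))) i j‖ ≤ _ := h
      _ ≤ (c₁ ^ 2 * (2 / 𝔡) ^ 2 * M ^ 2
            * Real.exp (-(η / 2) * dist (y i.1) (y m₁) + -(η / 2) * dist (y m₂) (y j.1))) * M := by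
          apply mul_le_mul_of_nonneg_left hφb
          have := Real.exp_pos (-(η / 2) * dist (y i.1) (y m₁) + -(η / 2) * dist (y m₂) (y j.1))
          positivity
      _ = _ := by ring
  -- Step 4 : R ∘L (B₁ ∘L (R ∘L (B₂ ∘L R))) at the diagonal
  have claim4 : ‖entry (R ∘L (B₁ ∘L (R ∘L (B₂ ∘L R)))) (ℓ, a) (ℓ, a)‖ ≤
      c₁ ^ 2 * (2 / 𝔡) ^ 3 * M ^ 4
        * Real.exp (-(η / 2) * dist (y ℓ) (y m₁) + -(η / 2) * dist (y m₂) (y ℓ)) := by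
    obtain ⟨hφs, hφb⟩ := hΦ ℓ
    have hb : ∀ p : Λ × Fin Nb,
        ‖entry R (ℓ, a) p‖ * ‖entry (B₁ ∘L (R ∘L (B₂ ∘L R))) p (ℓ, a)‖ ≤
        (c₁ ^ 2 * (2 / 𝔡) ^ 3 * M ^ 3
          * Real.exp (-(η / 2) * dist (y ℓ) (y m₁) + -(η / 2) * dist (y m₂) (y ℓ)))
          * Real.exp (-(η / 2) * dist (y p.1) (y ℓ)) := by
      intro p
      refine norm_mul_exp_le (hR' (ℓ, a) p) (claim3 p (ℓ, a)) (norm_nonneg _) (norm_nonneg _)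
        h2𝔡.le (by positivity) (by ring) ?_
      have ht := dist_triangle (y ℓ) (y p.1) (y m₁)
      have h1 : 0 ≤ η * dist (y ℓ) (y p.1) := mul_nonneg hη.le dist_nonneg
      have h3 : 0 ≤ η * (dist (y ℓ) (y p.1) + dist (y p.1) (y m₁) - dist (y ℓ) (y m₁)) :=
        mul_nonneg hη.le (by linarith)
      have hcomm : dist (y p.1) (y ℓ) = dist (y ℓ) (y p.1) := dist_comm _ _
      rw [hcomm]
      linarith
    have h := entry_comp_le R (B₁ ∘L (R ∘L (B₂ ∘L R))) (ℓ, a) (ℓ, a) _ _ hφs hb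
    calc ‖entry (R ∘L (B₁ ∘L (R ∘L (B₂ ∘L R)))) (ℓ, a) (ℓ, a)‖ ≤ _ := h
      _ ≤ (c₁ ^ 2 * (2 / 𝔡) ^ 3 * M ^ 3
            * Real.exp (-(η / 2) * dist (y ℓ) (y m₁) + -(η / 2) * dist (y m₂) (y ℓ))) * M := by
          apply mul_le_mul_of_nonneg_left hφb
          have := Real.exp_pos (-(η / 2) * dist (y ℓ) (y m₁) + -(η / 2) * dist (y m₂) (y ℓ))
          positivity
      _ = _ := by ring
  refine claim4.trans ?_
  -- final exponential comparison
  have hexpfin : Real.exp (-(η / 2) * dist (y ℓ) (y m₁) + -(η / 2) * dist (y m₂) (y ℓ))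
      ≤ Real.exp (-(η / 4) * (dist (y ℓ) (y m₁) + dist (y ℓ) (y m₂))) := by
    apply Real.exp_le_exp.mpr
    have hcomm : dist (y m₂) (y ℓ) = dist (y ℓ) (y m₂) := dist_comm _ _
    have h1 : 0 ≤ η * dist (y ℓ) (y m₁) := mul_nonneg hη.le dist_nonneg
    have h2 : 0 ≤ η * dist (y ℓ) (y m₂) := mul_nonneg hη.le dist_nonneg
    rw [hcomm]
    linarith
  -- final constant comparison
  have hkey := key_pow_bound hd hη
  have hdinv : (0:ℝ) ≤ 𝔡⁻¹ ^ 3 := pow_nonneg (inv_nonneg.mpr h𝔡.le) 3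
  have h8 : ((2:ℝ) / 𝔡) ^ 3 = 8 * 𝔡⁻¹ ^ 3 := by
    rw [div_pow, inv_pow]
    norm_num
    rw [div_eq_mul_inv]
  have hMexp : M ^ 4 = (Nb : ℝ) ^ 4
      * ((1 + 2 / 𝔪) ^ d * (4 ^ (d + 1) * (d.factorial : ℝ))) ^ 4
      * (1 + (η / 2)⁻¹ ^ (d + 1)) ^ 4 := by
    rw [hMdef]; ring
  have hconst : c₁ ^ 2 * (2 / 𝔡) ^ 3 * M ^ 4
      ≤ (8 * c₁ ^ 2 * (Nb : ℝ) ^ 4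
          * ((1 + 2 / 𝔪) ^ d * (4 ^ (d + 1) * (d.factorial : ℝ))) ^ 4 * 2 ^ (4 * d + 9))
        * 𝔡⁻¹ ^ 3 * (1 + η⁻¹ ^ (8 * d)) := by
    rw [hMexp, h8]
    have hA0 : (0:ℝ) ≤ c₁ ^ 2 * (8 * 𝔡⁻¹ ^ 3) * ((Nb : ℝ) ^ 4
        * ((1 + 2 / 𝔪) ^ d * (4 ^ (d + 1) * (d.factorial : ℝ))) ^ 4) := by
      apply mul_nonneg (mul_nonneg (by positivity) (by linarith)) 
      exact mul_nonneg (by positivity) (pow_nonneg hK0.le 4)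
    calc c₁ ^ 2 * (8 * 𝔡⁻¹ ^ 3) * ((Nb : ℝ) ^ 4
          * ((1 + 2 / 𝔪) ^ d * (4 ^ (d + 1) * (d.factorial : ℝ))) ^ 4
          * (1 + (η / 2)⁻¹ ^ (d + 1)) ^ 4)
        = (c₁ ^ 2 * (8 * 𝔡⁻¹ ^ 3) * ((Nb : ℝ) ^ 4
            * ((1 + 2 / 𝔪) ^ d * (4 ^ (d + 1) * (d.factorial : ℝ))) ^ 4))
            * (1 + (η / 2)⁻¹ ^ (d + 1)) ^ 4 := by ring
      _ ≤ (c₁ ^ 2 * (8 * 𝔡⁻¹ ^ 3) * ((Nb : ℝ) ^ 4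
            * ((1 + 2 / 𝔪) ^ d * (4 ^ (d + 1) * (d.factorial : ℝ))) ^ 4))
            * (2 ^ (4 * d + 9) * (1 + η⁻¹ ^ (8 * d))) :=
          mul_le_mul_of_nonneg_left hkey hA0
      _ = _ := by ring
  have hRHS0 : 0 ≤ (8 * c₁ ^ 2 * (Nb : ℝ) ^ 4
      * ((1 + 2 / 𝔪) ^ d * (4 ^ (d + 1) * (d.factorial : ℝ))) ^ 4 * 2 ^ (4 * d + 9))
      * 𝔡⁻¹ ^ 3 * (1 + η⁻¹ ^ (8 * d)) := by
    apply mul_nonneg (mul_nonneg _ hdinv) (by positivity)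
    apply mul_nonneg (mul_nonneg (mul_nonneg (by positivity) (by positivity)) _) (by positivity)
    exact pow_nonneg hK0.le 4
  exact mul_le_mul hconst hexpfin (Real.exp_pos _).le hRHS0
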